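/- Suppose c : [μ]² → ω witnesses Pr₀(μ,μ,ℵ₀,ℵ₀). Then for every k, n ∈ ω, every family {x_α : α < μ} of μ pairwise disjoint n-element subsets of μ, and every family of colorings {f_{i,j} : n × n → ω : i < j < k}, there exist β₀ < β₁ < ⋯ < β_{k−1} < μ such that c(x_{β_i}^m, x_{β_j}^{m'}) = f_{i,j}(m, m') for all i < j < k and all m, m' < n, where x^m denotes the m-th element of x in increasing order. -/

import Mathlib

open Cardinal

/-- The coloring principle `Pr₀(μ,μ,ℵ₀,ℵ₀)`: `c` is symmetric and for every `n`, every family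
of `μ` pairwise disjoint `n`-element subsets of `μ` (presented by their increasing
enumerations) and every `f : n × n → ω`, there are `α < β` realizing `f` between the `α`-th
and `β`-th sets. -/
def Pr0 (μ : Cardinal.{0}) (c : Ordinal → Ordinal → ℕ) : Prop :=
  (∀ a b, c a b = c b a) ∧
  ∀ (n : ℕ) (x : Ordinal → Fin n → Ordinal),
    (∀ α, α < μ.ord → StrictMono (x α) ∧ ∀ m, x α m < μ.ord) →
    (∀ α β, α < μ.ord → β < μ.ord → α ≠ β → ∀ m m', x α m ≠ x β m') →
    ∀ f : Fin n → Fin n → ℕ,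
      ∃ α β, α < β ∧ β < μ.ord ∧ ∀ m m', c (x α m) (x β m') = f m m'

namespace Pr0Tuples

universe u

/-- If `Pr0 μ c` holds then `μ` is infinite. -/
lemma infinite_of_pr0 {μ : Cardinal.{0}} {c : Ordinal → Ordinal → ℕ} (hc : Pr0 μ c) :
    ℵ₀ ≤ μ := by
  by_contra h
  push_neg at h
  -- `Set.Iio μ.ord` is finite
  have hfin : (Set.Iio μ.ord).Finite := by
    rw [← Cardinal.lt_aleph0_iff_set_finite, Ordinal.mk_Iio_ordinal, Cardinal.card_ord]
    exact Cardinal.lift_lt_aleph0.2 h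
  have hTfin : ((fun p : Ordinal × Ordinal => c p.1 p.2) ''
      (Set.Iio μ.ord ×ˢ Set.Iio μ.ord)).Finite := (hfin.prod hfin).image _
  obtain ⟨N, hN⟩ := hTfin.bddAbove
  obtain ⟨α, β, hαβ, hβ, hcol⟩ := hc.2 1 (fun α _ => α)
    (fun α hα => ⟨fun a b hab => absurd (Subsingleton.elim a b) hab.ne, fun _ => hα⟩)
    (fun α β _ _ hne _ _ => hne) (fun _ _ => N + 1)
  have : c α β ∈ (fun p : Ordinal × Ordinal => c p.1 p.2) ''
      (Set.Iio μ.ord ×ˢ Set.Iio μ.ord) :=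
    ⟨(α, β), ⟨hαβ.trans hβ, hβ⟩, rfl⟩
  have hle := hN this
  rw [hcol 0 0] at hle
  omega

variable {μ : Cardinal.{0}}

lemma lift_card_lt (hμ : ℵ₀ ≤ μ) {δ : Ordinal} (h : δ < μ.ord) :
    Cardinal.lift.{1} δ.card < Cardinal.lift.{1} μ :=
  Cardinal.lift_lt.2 (Cardinal.lt_ord.1 h)

lemma mk_Iio_ord : #(Set.Iio μ.ord) = Cardinal.lift.{1} μ := by
  rw [Ordinal.mk_Iio_ordinal, Cardinal.card_ord]

/-- any subset of `Iio μ.ord` of full size is unbounded in `μ.ord`. -/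
lemma unbounded_of_full (hμ : ℵ₀ ≤ μ) {C : Set Ordinal} (hsub : C ⊆ Set.Iio μ.ord)
    (hcard : #C = Cardinal.lift.{1} μ) : ∀ γ < μ.ord, ∃ δ ∈ C, γ < δ := by
  intro γ hγ
  by_contra hcon
  push_neg at hcon
  have hsub' : C ⊆ Set.Iio (γ + 1) := fun δ hδ =>
    Set.mem_Iio.2 (lt_of_le_of_lt (hcon δ hδ) (lt_add_one γ))
  have hlt : #C < Cardinal.lift.{1} μ := by
    calc #C ≤ #(Set.Iio (γ + 1)) := Cardinal.mk_le_mk_of_subset hsub'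
    _ = Cardinal.lift.{1} (γ+1).card := Ordinal.mk_Iio_ordinal _
    _ < Cardinal.lift.{1} μ := lift_card_lt hμ (by
        rw [← Order.succ_eq_add_one]
        exact (Cardinal.isSuccLimit_ord hμ).succ_lt hγ)
  rw [hcard] at hlt
  exact lt_irrefl _ hlt

lemma mk_diff_full (hμ : ℵ₀ ≤ μ) {C U : Set Ordinal} (hC : #C = Cardinal.lift.{1} μ)
    (hU : #U < Cardinal.lift.{1} μ) : #(C \ U : Set Ordinal) = Cardinal.lift.{1} μ := by
  refine le_antisymm (hC ▸ Cardinal.mk_le_mk_of_subset Set.diff_subset) ?_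
  by_contra hcon
  push_neg at hcon
  have h1 : C ⊆ (C \ U) ∪ U := fun a ha => by
    by_cases h : a ∈ U
    · exact Or.inr h
    · exact Or.inl ⟨ha, h⟩
  have h2 : #C ≤ #(C \ U : Set Ordinal) + #U :=
    (Cardinal.mk_le_mk_of_subset h1).trans (Cardinal.mk_union_le _ _)
  have := h2.trans_lt (Cardinal.add_lt_of_lt (Cardinal.aleph0_le_lift.2 hμ) hcon hU)
  rw [hC] at this
  exact lt_irrefl _ this

lemma mk_biUnion_lt (hμ : ℵ₀ ≤ μ) {ι : Type 1} (t : Finset ι) (F : ι → Set Ordinal)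
    (h : ∀ i ∈ t, #(F i) < Cardinal.lift.{1} μ) :
    #(⋃ i ∈ t, F i : Set Ordinal) < Cardinal.lift.{1} μ := by
  classical
  induction t using Finset.induction with
  | empty =>
    rw [show (⋃ i ∈ (∅ : Finset ι), F i) = (∅ : Set Ordinal) by simp, Cardinal.mk_emptyCollection]
    exact (Cardinal.aleph0_pos : (0 : Cardinal.{1}) < ℵ₀).trans_le (Cardinal.aleph0_le_lift.2 hμ)
  | @insert a t ha IH =>
    have : (⋃ i ∈ insert a t, F i) ⊆ F a ∪ ⋃ i ∈ t, F i := by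
      intro y hy
      simp only [Set.mem_iUnion, Finset.mem_insert] at hy
      obtain ⟨i, hi1 | hi1, hi2⟩ := hy
      · exact Or.inl (hi1 ▸ hi2)
      · exact Or.inr (Set.mem_iUnion.2 ⟨i, Set.mem_iUnion.2 ⟨hi1, hi2⟩⟩)
    refine (Cardinal.mk_le_mk_of_subset this).trans_lt ?_
    refine ((Cardinal.mk_union_le _ _).trans_lt
      (Cardinal.add_lt_of_lt (Cardinal.aleph0_le_lift.2 hμ) ?_ ?_))
    · exact h a (Finset.mem_insert_self a t)
    · exact IH fun i hi => h i (Finset.mem_insert_of_mem hi)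

lemma pigeonhole {B : Type} [Fintype B] (hμ : ℵ₀ ≤ μ) {s : Set Ordinal}
    (hs : #s = Cardinal.lift.{1} μ) (g : Ordinal → B) :
    ∃ b : B, #{a : Ordinal | a ∈ s ∧ g a = b} = Cardinal.lift.{1} μ := by
  classical
  by_contra hcon
  push_neg at hcon
  have hlt : ∀ b : B, #{a : Ordinal | a ∈ s ∧ g a = b} < Cardinal.lift.{1} μ := by
    intro b
    refine lt_of_le_of_ne ?_ (hcon b)
    rw [← hs]
    exact Cardinal.mk_le_mk_of_subset fun a ha => ha.1
  have hsub : s ⊆ ⋃ b ∈ (Finset.univ : Finset (ULift.{1} B)),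
      {a : Ordinal | a ∈ s ∧ g a = b.down} := by
    intro a ha
    simp only [Set.mem_iUnion]
    exact ⟨ULift.up (g a), Finset.mem_univ _, ha, rfl⟩
  have := (Cardinal.mk_le_mk_of_subset hsub).trans_lt
    (mk_biUnion_lt hμ _ _ fun b _ => hlt b.down)
  rw [hs] at this
  exact lt_irrefl _ this

lemma exists_enum (hμ : ℵ₀ ≤ μ) {C : Set Ordinal} (hsub : C ⊆ Set.Iio μ.ord)
    (hcard : #C = Cardinal.lift.{1} μ) :
    ∃ e : Ordinal → Ordinal, StrictMono e ∧ ∀ ζ < μ.ord, e ζ ∈ C := by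
  set s : Set Ordinal := C ∪ Set.Ici μ.ord with hs
  have hB : ¬ BddAbove s := by
    rintro ⟨b, hb⟩
    have h1 : max μ.ord (b + 1) ∈ s := Or.inr (Set.mem_Ici.2 (le_max_left _ _))
    have h2 := hb h1
    have h3 : b + 1 ≤ b := le_trans (le_max_right _ _) h2
    exact absurd h3 (not_le.2 (lt_add_one b))
  refine ⟨Ordinal.enumOrd s, Ordinal.enumOrd_strictMono hB, ?_⟩
  by_contra hcon
  push_neg at hcon
  set Bad : Set Ordinal := {ζ | ζ < μ.ord ∧ Ordinal.enumOrd s ζ ∉ C} with hBad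
  have hne : Bad.Nonempty := by
    obtain ⟨ζ, h1, h2⟩ := hcon
    exact ⟨ζ, h1, h2⟩
  set ζ₀ := Ordinal.lt_wf.min Bad hne with hζ₀
  have hζ₀mem : ζ₀ ∈ Bad := Ordinal.lt_wf.min_mem Bad hne
  have hge : μ.ord ≤ Ordinal.enumOrd s ζ₀ := by
    have := Ordinal.enumOrd_mem hB ζ₀
    rcases this with h | h
    · exact absurd h hζ₀mem.2
    · exact h
  have himg : C ⊆ Ordinal.enumOrd s '' Set.Iio ζ₀ := by
    intro y hy
    have hys : y ∈ Set.range (Ordinal.enumOrd s) := by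
      rw [Ordinal.range_enumOrd hB]; exact Or.inl hy
    obtain ⟨ζ, hζ⟩ := hys
    refine ⟨ζ, ?_, hζ⟩
    rw [Set.mem_Iio]
    by_contra hζζ₀
    push_neg at hζζ₀
    have : Ordinal.enumOrd s ζ₀ ≤ Ordinal.enumOrd s ζ :=
      (Ordinal.enumOrd_strictMono hB).monotone hζζ₀
    rw [hζ] at this
    exact absurd (hsub hy) (not_lt.2 (hge.trans this))
  have : #C < Cardinal.lift.{1} μ := by
    calc #C ≤ #(Ordinal.enumOrd s '' Set.Iio ζ₀) := Cardinal.mk_le_mk_of_subset himg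
    _ ≤ #(Set.Iio ζ₀) := Cardinal.mk_image_le
    _ = Cardinal.lift.{1} ζ₀.card := Ordinal.mk_Iio_ordinal _
    _ < Cardinal.lift.{1} μ := lift_card_lt hμ hζ₀mem.1
  rw [hcard] at this
  exact lt_irrefl _ this

lemma exists_partition (hμ : ℵ₀ ≤ μ) {C : Set Ordinal} (hcard : #C = Cardinal.lift.{1} μ) :
    ∃ A : Ordinal → Set Ordinal, (∀ ι, A ι ⊆ C) ∧ (∀ ι, ι < μ.ord → #(A ι) = Cardinal.lift.{1} μ)
      ∧ ∀ ι ι', ι ≠ ι' → ∀ a, a ∈ A ι → a ∉ A ι' := by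
  have hprod : #(↥(Set.Iio μ.ord) × ↥C) = #(↥C) := by
    rw [Cardinal.mk_prod, Cardinal.lift_id, Cardinal.lift_id, mk_Iio_ord, hcard,
      Cardinal.mul_eq_self (Cardinal.aleph0_le_lift.2 hμ)]
  obtain ⟨P⟩ := Cardinal.eq.1 hprod.symm
  refine ⟨fun ι => if h : ι < μ.ord then
      (fun z : ↥C => (z : Ordinal)) '' {z | (P z).1 = ⟨ι, h⟩} else ∅, ?_, ?_, ?_⟩
  · intro ι a ha
    dsimp only at ha
    by_cases h : ι < μ.ord
    · rw [dif_pos h] at ha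
      obtain ⟨z, _, rfl⟩ := ha
      exact z.2
    · rw [dif_neg h] at ha
      exact absurd ha (Set.notMem_empty a)
  · intro ι hι
    dsimp only
    rw [dif_pos hι]
    rw [Cardinal.mk_image_eq_of_injOn _ _ (Subtype.val_injective.injOn)]
    have : {z : ↥C | (P z).1 = ⟨ι, hι⟩} ≃ ↥C :=
      { toFun := fun z => (P z.1).2
        invFun := fun y => ⟨P.symm (⟨ι, hι⟩, y), by simp [Set.mem_setOf_eq]⟩
        left_inv := by
          rintro ⟨z, hz⟩
          rw [Set.mem_setOf_eq] at hz
          apply Subtype.ext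
          dsimp
          conv_rhs => rw [← P.symm_apply_apply z]
          congr 1
          rw [← hz]
        right_inv := fun y => by simp }
    rw [Cardinal.mk_congr this, hcard]
  · intro ι ι' hne a ha ha'
    dsimp only at ha ha'
    by_cases h : ι < μ.ord
    · by_cases h' : ι' < μ.ord
      · rw [dif_pos h] at ha
        rw [dif_pos h'] at ha'
        obtain ⟨z, hz, hza⟩ := ha
        obtain ⟨z', hz', hza'⟩ := ha'
        have : z = z' := Subtype.val_injective (hza.trans hza'.symm)
        subst this
        rw [Set.mem_setOf_eq] at hz hz'
        rw [hz] at hz'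
        exact hne (congrArg Subtype.val hz')
      · rw [dif_neg h'] at ha'; exact ha'
    · rw [dif_neg h] at ha; exact ha

lemma snoc_strictMono {k : ℕ} {u : Fin k → Ordinal} (hu : StrictMono u) {d : Ordinal}
    (hd : ∀ q, u q < d) : StrictMono (Fin.snoc u d : Fin (k + 1) → Ordinal) := by
  intro i j hij
  rcases Fin.eq_castSucc_or_eq_last j with ⟨r, rfl⟩ | rfl
  · obtain ⟨q, rfl⟩ : ∃ q, i = Fin.castSucc q := by
      rcases Fin.eq_castSucc_or_eq_last i with ⟨q, rfl⟩ | rfl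
      · exact ⟨q, rfl⟩
      · exact absurd hij (by simp [Fin.lt_iff_val_lt_val, Fin.le_last,
          Nat.not_lt.2 (Nat.le_of_lt_succ (Fin.castSucc r).2)])
    simp only [Fin.snoc_castSucc]
    exact hu (by exact_mod_cast hij)
  · obtain ⟨q, rfl⟩ : ∃ q, i = Fin.castSucc q := by
      rcases Fin.eq_castSucc_or_eq_last i with ⟨q, rfl⟩ | rfl
      · exact ⟨q, rfl⟩
      · exact absurd hij (lt_irrefl _)
    simp only [Fin.snoc_castSucc, Fin.snoc_last]
    exact hd q


lemma sol {c : Ordinal → Ordinal → ℕ} (hc : Pr0 μ c) (hμ : ℵ₀ ≤ μ) :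
    ∀ (k n : ℕ) (x : Ordinal → Fin n → Ordinal),
      (∀ α, α < μ.ord → StrictMono (x α) ∧ ∀ m, x α m < μ.ord) →
      (∀ α β, α < μ.ord → β < μ.ord → α ≠ β → ∀ m m', x α m ≠ x β m') →
      ∀ (f : Fin k → Fin k → Fin n → Fin n → ℕ) (C : Set Ordinal),
        C ⊆ Set.Iio μ.ord → #C = Cardinal.lift.{1} μ →
        ∃ β : Fin k → Ordinal, StrictMono β ∧ (∀ i, β i ∈ C) ∧
          ∀ i j : Fin k, i < j → ∀ m m', c (x (β i) m) (x (β j) m') = f i j m m' := by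
  intro k
  induction k with
  | zero =>
    intro n x hx1 hx2 f C hsub hcard
    exact ⟨Fin.elim0, fun a => a.elim0, fun i => i.elim0, fun i => i.elim0⟩
  | succ k IH =>
    intro n x hx1 hx2 f C hsub hcard
    classical
    obtain ⟨A, hAsub, hAcard, hAdisj⟩ := exists_partition hμ hcard
    have hAIio : ∀ ι, A ι ⊆ Set.Iio μ.ord := fun ι => (hAsub ι).trans hsub
    have hordpos : (0 : Ordinal) < μ.ord := by
      calc (0 : Ordinal) < Ordinal.omega0 := Ordinal.omega0_pos
      _ ≤ μ.ord := by rw [← Cardinal.ord_aleph0]; exact Cardinal.ord_le_ord.2 hμ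
    -- build the members: a `k`-tuple realizing `f` on the first `k` coordinates,
    -- together with a "donor" index above it, all inside `A ι`
    have hmem : ∀ ι : Ordinal, ∃ p : (Fin k → Ordinal) × Ordinal, ι < μ.ord →
        StrictMono p.1 ∧ (∀ q, p.1 q ∈ A ι) ∧
        (∀ i j : Fin k, i < j → ∀ m m', c (x (p.1 i) m) (x (p.1 j) m')
            = f i.castSucc j.castSucc m m') ∧
        p.2 ∈ A ι ∧ ∀ q, p.1 q < p.2 := by
      intro ι
      by_cases hι : ι < μ.ord
      · obtain ⟨u, hu1, hu2, hu3⟩ := IH n x hx1 hx2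
          (fun i j m m' => f i.castSucc j.castSucc m m') (A ι) (hAIio ι) (hAcard ι hι)
        have hγ : Finset.univ.sup u < μ.ord := by
          rw [Finset.sup_lt_iff hordpos]
          exact fun q _ => hAIio ι (hu2 q)
        obtain ⟨d, hdA, hdγ⟩ := unbounded_of_full hμ (hAIio ι) (hAcard ι hι) _ hγ
        exact ⟨(u, d), fun _ => ⟨hu1, hu2, hu3, hdA,
          fun q => (Finset.le_sup (Finset.mem_univ q)).trans_lt hdγ⟩⟩
      · exact ⟨(fun _ => 0, 0), fun h => absurd h hι⟩
    choose mem hmemspec using hmem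
    set N := (k + 1) * n with hNdef
    set idx : Ordinal → Fin (k + 1) → Ordinal :=
      fun ι => Fin.snoc (mem ι).1 (mem ι).2 with hidx
    have hidxA : ∀ ι, ι < μ.ord → ∀ b, idx ι b ∈ A ι := by
      intro ι hι b
      rcases Fin.eq_castSucc_or_eq_last b with ⟨q, rfl⟩ | rfl
      · rw [hidx]; dsimp only; rw [Fin.snoc_castSucc]; exact (hmemspec ι hι).2.1 q
      · rw [hidx]; dsimp only; rw [Fin.snoc_last]; exact (hmemspec ι hι).2.2.2.1
    have hidxIio : ∀ ι, ι < μ.ord → ∀ b, idx ι b < μ.ord :=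
      fun ι hι b => hAIio ι (hidxA ι hι b)
    have hidxmono : ∀ ι, ι < μ.ord → StrictMono (idx ι) := fun ι hι =>
      snoc_strictMono (hmemspec ι hι).1 (hmemspec ι hι).2.2.2.2
    -- enumerate the values of the member in increasing order, with its labeling
    have hdata : ∀ ι : Ordinal, ∃ q : (Fin N → Ordinal) × (Fin N → Fin (k + 1) × Fin n),
        ι < μ.ord → StrictMono q.1 ∧ (∀ s, x (idx ι (q.2 s).1) (q.2 s).2 = q.1 s) ∧
          Function.Bijective q.2 := by
      intro ι
      by_cases hι : ι < μ.ord
      · have hVinj : Function.Injective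
            (fun p : Fin (k + 1) × Fin n => x (idx ι p.1) p.2) := by
          intro p p' hpp
          dsimp only at hpp
          by_cases hb : p.1 = p'.1
          · have h2 : p.2 = p'.2 := by
              rw [hb] at hpp
              exact (hx1 _ (hidxIio ι hι p'.1)).1.injective hpp
            exact Prod.ext hb h2
          · exact absurd hpp (hx2 _ _ (hidxIio ι hι p.1) (hidxIio ι hι p'.1)
              (fun hcon => hb ((hidxmono ι hι).injective hcon)) _ _)
        set D : Finset Ordinal := Finset.image
          (fun p : Fin (k + 1) × Fin n => x (idx ι p.1) p.2) Finset.univ with hD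
        have hcardD : D.card = N := by
          rw [hD, Finset.card_image_of_injective _ hVinj, Finset.card_univ,
            Fintype.card_prod, Fintype.card_fin, Fintype.card_fin]
        set iso := D.orderIsoOfFin hcardD with hiso
        set z : Fin N → Ordinal := fun s => (iso s : Ordinal) with hz
        have hzmono : StrictMono z := fun a b hab => by
          rw [hz]; exact Subtype.coe_lt_coe.2 (iso.strictMono hab)
        have hmemD : ∀ s, (z s) ∈ D := fun s => (iso s).2
        have hlab : ∀ s : Fin N, ∃ p : Fin (k + 1) × Fin n, x (idx ι p.1) p.2 = z s := by
          intro s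
          obtain ⟨p, _, hp⟩ := Finset.mem_image.1 (hmemD s)
          exact ⟨p, hp⟩
        choose lab hlabspec using hlab
        have hlabinj : Function.Injective lab := by
          intro s s' hss
          apply hzmono.injective
          rw [← hlabspec s, ← hlabspec s', hss]
        refine ⟨(z, lab), fun _ => ⟨hzmono, hlabspec, ?_⟩⟩
        rw [Fintype.bijective_iff_injective_and_card]
        exact ⟨hlabinj, by rw [Fintype.card_fin, Fintype.card_prod, Fintype.card_fin,
          Fintype.card_fin]⟩
      · exact ⟨(fun _ => 0, fun s => finProdFinEquiv.symm s), fun h => absurd h hι⟩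
    choose dat hdataspec using hdata
    set zf : Ordinal → Fin N → Ordinal := fun ι => (dat ι).1 with hzf
    set lab : Ordinal → Fin N → Fin (k + 1) × Fin n := fun ι => (dat ι).2 with hlab
    -- pigeonhole on the labeling
    obtain ⟨π, hπ⟩ := pigeonhole (B := Fin N → Fin (k + 1) × Fin n) hμ
      (s := Set.Iio μ.ord) mk_Iio_ord lab
    set G : Set Ordinal := {a | a ∈ Set.Iio μ.ord ∧ lab a = π} with hG
    -- the donors of the members with the common labeling, enumerated increasingly
    have hdninj : Set.InjOn (fun ι => (mem ι).2) G := by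
      intro ι hι ι' hι' hdd
      dsimp only at hdd
      by_contra hne
      refine hAdisj ι ι' hne _ ((hmemspec ι hι.1).2.2.2.1) ?_
      rw [hdd]
      exact (hmemspec ι' hι'.1).2.2.2.1
    have hC'card : #((fun ι => (mem ι).2) '' G) = Cardinal.lift.{1} μ := by
      rw [Cardinal.mk_image_eq_of_injOn _ _ hdninj]
      exact hπ
    have hC'sub : ((fun ι => (mem ι).2) '' G) ⊆ Set.Iio μ.ord := by
      rintro _ ⟨ι, hι, rfl⟩
      exact hAIio ι ((hmemspec ι hι.1).2.2.2.1)
    obtain ⟨e, hemono, hemem⟩ := exists_enum hμ hC'sub hC'card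
    have hιof : ∀ ζ : Ordinal, ∃ ι : Ordinal, ζ < μ.ord → ι ∈ G ∧ (mem ι).2 = e ζ := by
      intro ζ
      by_cases hζ : ζ < μ.ord
      · obtain ⟨ι, hι, hee⟩ := hemem ζ hζ
        exact ⟨ι, fun _ => ⟨hι, hee⟩⟩
      · exact ⟨0, fun h => absurd h hζ⟩
    choose ιof hιofspec using hιof
    -- apply Pr0 to the family of value-enumerations of the members, sorted by donor
    have hyp1 : ∀ ζ, ζ < μ.ord → StrictMono (zf (ιof ζ)) ∧ ∀ s, zf (ιof ζ) s < μ.ord := by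
      intro ζ hζ
      have hιlt : ιof ζ < μ.ord := (hιofspec ζ hζ).1.1
      refine ⟨(hdataspec _ hιlt).1, fun s => ?_⟩
      show (dat (ιof ζ)).1 s < μ.ord
      rw [← (hdataspec _ hιlt).2.1 s]
      exact (hx1 _ (hidxIio _ hιlt _)).2 _
    have hyp2 : ∀ ζ ζ', ζ < μ.ord → ζ' < μ.ord → ζ ≠ ζ' →
        ∀ s s', zf (ιof ζ) s ≠ zf (ιof ζ') s' := by
      intro ζ ζ' hζ hζ' hne s s'
      have hιlt : ιof ζ < μ.ord := (hιofspec ζ hζ).1.1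
      have hι'lt : ιof ζ' < μ.ord := (hιofspec ζ' hζ').1.1
      have hii : ιof ζ ≠ ιof ζ' := by
        intro hcon
        apply hne
        apply hemono.injective
        rw [← (hιofspec ζ hζ).2, ← (hιofspec ζ' hζ').2, hcon]
      show (dat (ιof ζ)).1 s ≠ (dat (ιof ζ')).1 s'
      rw [← (hdataspec _ hιlt).2.1 s, ← (hdataspec _ hι'lt).2.1 s']
      refine hx2 _ _ (hidxIio _ hιlt _) (hidxIio _ hι'lt _) ?_ _ _
      intro hcon
      refine hAdisj _ _ hii (idx (ιof ζ) ((dat (ιof ζ)).2 s).1)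
        (hidxA _ hιlt ((dat (ιof ζ)).2 s).1) ?_
      rw [hcon]
      exact hidxA _ hι'lt _
    obtain ⟨ζ, ζ', hζζ', hζ'lt, hcol⟩ := hc.2 N (fun ζ => zf (ιof ζ)) hyp1 hyp2
      (fun s s' => f (π s).1 (π s').1 (π s).2 (π s').2)
    have hζlt : ζ < μ.ord := hζζ'.trans hζ'lt
    have hMspec := hιofspec ζ hζlt
    have hM'spec := hιofspec ζ' hζ'lt
    have hMG := hMspec.1
    have hM'G := hM'spec.1
    rw [hG, Set.mem_setOf_eq] at hMG hM'G
    have hMlt : ιof ζ < μ.ord := hMG.1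
    have hM'lt : ιof ζ' < μ.ord := hM'G.1
    have hdd : (mem (ιof ζ)).2 < (mem (ιof ζ')).2 := by
      rw [hMspec.2, hM'spec.2]
      exact hemono hζζ'
    have hud : ∀ q, (mem (ιof ζ)).1 q < (mem (ιof ζ')).2 :=
      fun q => ((hmemspec _ hMlt).2.2.2.2 q).trans hdd
    refine ⟨Fin.snoc (mem (ιof ζ)).1 (mem (ιof ζ')).2,
      snoc_strictMono (hmemspec _ hMlt).1 hud, ?_, ?_⟩
    · intro i
      rcases Fin.eq_castSucc_or_eq_last i with ⟨q, rfl⟩ | rfl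
      · rw [Fin.snoc_castSucc]
        exact hAsub _ ((hmemspec _ hMlt).2.1 q)
      · rw [Fin.snoc_last]
        exact hAsub _ ((hmemspec _ hM'lt).2.2.2.1)
    · -- the colors
      have hπbij : Function.Bijective π := by
        have hpos : (0 : Cardinal.{1}) < #(G : Set Ordinal) := by
          rw [hG, hπ]
          exact Cardinal.aleph0_pos.trans_le (Cardinal.aleph0_le_lift.2 hμ)
        obtain ⟨⟨ι₀, hι₀⟩⟩ := Cardinal.mk_ne_zero_iff.1 (ne_of_gt hpos)
        rw [hG, Set.mem_setOf_eq] at hι₀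
        have hb := (hdataspec ι₀ hι₀.1).2.2
        have hbe : (dat ι₀).2 = π := hι₀.2
        rwa [hbe] at hb
      have key : ∀ (b b' : Fin (k + 1)) (m m' : Fin n),
          c (x (idx (ιof ζ) b) m) (x (idx (ιof ζ') b') m') = f b b' m m' := by
        intro b b' m m'
        obtain ⟨s, hs⟩ := hπbij.2 (b, m)
        obtain ⟨s', hs'⟩ := hπbij.2 (b', m')
        have hMp : (dat (ιof ζ)).2 = π := hMG.2
        have hM'p : (dat (ιof ζ')).2 = π := hM'G.2
        have h1 : x (idx (ιof ζ) b) m = zf (ιof ζ) s := by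
          have ht := (hdataspec _ hMlt).2.1 s
          rw [hMp, hs] at ht
          exact ht
        have h2 : x (idx (ιof ζ') b') m' = zf (ιof ζ') s' := by
          have ht := (hdataspec _ hM'lt).2.1 s'
          rw [hM'p, hs'] at ht
          exact ht
        rw [h1, h2, hcol s s', hs, hs']
      intro i j hij m m'
      rcases Fin.eq_castSucc_or_eq_last j with ⟨r, rfl⟩ | rfl
      · obtain ⟨q, rfl⟩ : ∃ q, i = Fin.castSucc q := by
          rcases Fin.eq_castSucc_or_eq_last i with ⟨q, rfl⟩ | rfl
          · exact ⟨q, rfl⟩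
          · exact absurd hij (lt_asymm (Fin.castSucc_lt_last r))
        rw [Fin.snoc_castSucc, Fin.snoc_castSucc]
        exact (hmemspec _ hMlt).2.2.1 q r (Fin.castSucc_lt_castSucc_iff.1 hij) m m'
      · obtain ⟨q, rfl⟩ : ∃ q, i = Fin.castSucc q := by
          rcases Fin.eq_castSucc_or_eq_last i with ⟨q, rfl⟩ | rfl
          · exact ⟨q, rfl⟩
          · exact absurd hij (lt_irrefl _)
        rw [Fin.snoc_castSucc, Fin.snoc_last]
        have hkey := key (Fin.castSucc q) (Fin.last k) m m'
        have e1 : idx (ιof ζ) (Fin.castSucc q) = (mem (ιof ζ)).1 q := by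
          rw [hidx]; dsimp only; rw [Fin.snoc_castSucc]
        have e2 : idx (ιof ζ') (Fin.last k) = (mem (ιof ζ')).2 := by
          rw [hidx]; dsimp only; rw [Fin.snoc_last]
        rw [e1, e2] at hkey
        exact hkey

end Pr0Tuples


/-- `Pr₀(μ,μ,ℵ₀,ℵ₀)` upgraded from pairs to `k`-tuples: one can realize any prescribed family
of colorings `f_{i,j}` (`i < j < k`) simultaneously on a `k`-tuple `β₀ < ⋯ < β_{k-1}`. -/
theorem pr0_tuples (μ : Cardinal.{0}) (c : Ordinal → Ordinal → ℕ) (hc : Pr0 μ c) :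
    ∀ (k n : ℕ) (x : Ordinal → Fin n → Ordinal),
      (∀ α, α < μ.ord → StrictMono (x α) ∧ ∀ m, x α m < μ.ord) →
      (∀ α β, α < μ.ord → β < μ.ord → α ≠ β → ∀ m m', x α m ≠ x β m') →
      ∀ f : Fin k → Fin k → Fin n → Fin n → ℕ,
        ∃ β : Fin k → Ordinal, StrictMono β ∧ (∀ i, β i < μ.ord) ∧
          ∀ i j : Fin k, i < j → ∀ m m', c (x (β i) m) (x (β j) m') = f i j m m' := by
  have hμ := Pr0Tuples.infinite_of_pr0 hc
  intro k n x hx1 hx2 f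
  obtain ⟨β, h1, h2, h3⟩ := Pr0Tuples.sol hc hμ k n x hx1 hx2 f (Set.Iio μ.ord)
    (fun a ha => ha) Pr0Tuples.mk_Iio_ord
  exact ⟨β, h1, fun i => h2 i, h3⟩
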